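/- Let m, n, t be positive integers and let {Ψ_{j1}, …, Ψ_{j(mn)}}, j = 1, …, t, be t mutually unbiased orthonormal bases of ℂ^m ⊗ ℂ^n ≅ ℂ^(mn). Then Σ_{j=1}^{t} Σ_{i=1}^{mn} P(Tr_A(Ψ_{ji} Ψ_{ji}^*)) ≤ (m² + t − 1)·n. -/

import Mathlib

open Matrix Finset

/-- Left partial trace: trace out the first (A) factor. -/
noncomputable def trA {m n : ℕ} (X : Matrix (Fin m × Fin n) (Fin m × Fin n) ℂ) :
    Matrix (Fin n) (Fin n) ℂ :=
  Matrix.of fun j j' => ∑ i : Fin m, X (i, j) (i, j')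

lemma sum3_comm {M : Type*} [AddCommMonoid M] {α β γ : Type*} [Fintype α] [Fintype β] [Fintype γ]
    (f : α → β → γ → M) :
    (∑ a, ∑ b, ∑ c, f a b c) = ∑ c, ∑ a, ∑ b, f a b c :=
  calc (∑ a, ∑ b, ∑ c, f a b c)
      = ∑ a, ∑ c, ∑ b, f a b c := Finset.sum_congr rfl fun _ _ => Finset.sum_comm
    _ = ∑ c, ∑ a, ∑ b, f a b c := Finset.sum_comm

lemma sum4_comm {M : Type*} [AddCommMonoid M] {α β γ δ : Type*} [Fintype α] [Fintype β] [Fintype γ] [Fintype δ]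
    (f : α → β → γ → δ → M) :
    (∑ a, ∑ b, ∑ c, ∑ d, f a b c d) = ∑ c, ∑ d, ∑ a, ∑ b, f a b c d :=
  calc (∑ a, ∑ b, ∑ c, ∑ d, f a b c d)
      = ∑ a, ∑ c, ∑ b, ∑ d, f a b c d :=
        Finset.sum_congr rfl fun _ _ => Finset.sum_comm
    _ = ∑ c, ∑ a, ∑ b, ∑ d, f a b c d := Finset.sum_comm
    _ = ∑ c, ∑ a, ∑ d, ∑ b, f a b c d :=
        Finset.sum_congr rfl fun _ _ => Finset.sum_congr rfl fun _ _ => Finset.sum_comm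
    _ = ∑ c, ∑ d, ∑ a, ∑ b, f a b c d :=
        Finset.sum_congr rfl fun _ _ => Finset.sum_comm

lemma purity_eq {m n : ℕ} (ψ : (Fin m × Fin n) → ℂ) :
    Matrix.trace (trA (Matrix.vecMulVec ψ (star ψ)) ^ 2)
      = ∑ a : Fin m, ∑ a' : Fin m,
          (∑ b : Fin n, ψ (a,b) * (starRingEnd ℂ) (ψ (a',b))) *
          (∑ b : Fin n, (starRingEnd ℂ) (ψ (a,b)) * ψ (a',b)) := by
  classical
  simp only [trA, Matrix.trace, Matrix.diag, pow_two, Matrix.mul_apply, Matrix.of_apply,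
    Matrix.vecMulVec_apply, Pi.star_apply, RCLike.star_def, Finset.sum_mul_sum]
  rw [sum4_comm]
  exact Finset.sum_congr rfl fun a _ => Finset.sum_congr rfl fun a' _ =>
    Finset.sum_congr rfl fun b _ => Finset.sum_congr rfl fun b' _ => by ring

section Bessel

variable {m n t : ℕ}

lemma bessel (Ψ : Fin t → Fin (m * n) → (Fin m × Fin n) → ℂ)
    (Hc : ∀ j (x y : Fin m × Fin n),
      (∑ i, (starRingEnd ℂ) (Ψ j i x) * Ψ j i y) = if x = y then 1 else 0)
    (Hg : ∀ (j j' : Fin t) (i i' : Fin (m * n)),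
      Complex.normSq (∑ a, (starRingEnd ℂ) (Ψ j i a) * Ψ j' i' a)
        = if j = j' then (if i = i' then (1:ℝ) else 0) else 1 / ((m:ℝ) * n))
    (K : Matrix (Fin m) (Fin m) ℂ) (htr : (∑ a, K a a) = 0)
    (c : Fin t → Fin (m * n) → ℝ)
    (hcdef : ∀ j i, c j i = (∑ a, ∑ a', K a a' *
        (∑ b, (starRingEnd ℂ) (Ψ j i ((a, b))) * Ψ j i ((a', b)))).re) :
    ∑ j, ∑ i, (c j i) ^ 2 ≤ (n : ℝ) * ∑ a, ∑ a', Complex.normSq (K a a') := by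
  classical
  set chat : Fin t → Fin (m * n) → ℂ := fun j i => ∑ a, ∑ a', K a a' *
      (∑ b, (starRingEnd ℂ) (Ψ j i ((a, b))) * Ψ j i ((a', b))) with hchat
  have hcre : ∀ j i, c j i = (chat j i).re := hcdef
  -- sum of chat over i vanishes
  have hzeroC : ∀ j, (∑ i, chat j i) = 0 := by
    intro j
    rw [hchat]
    have : (∑ i, ∑ a, ∑ a', K a a' * (∑ b, (starRingEnd ℂ) (Ψ j i ((a, b))) * Ψ j i ((a', b))))
        = ∑ a, ∑ a', K a a' * (∑ b, ∑ i, (starRingEnd ℂ) (Ψ j i ((a, b))) * Ψ j i ((a', b))) := by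
      rw [Finset.sum_comm]
      refine Finset.sum_congr rfl fun a _ => ?_
      rw [Finset.sum_comm]
      refine Finset.sum_congr rfl fun a' _ => ?_
      rw [← Finset.mul_sum, Finset.sum_comm]
    rw [this]
    have h2 : ∀ a a' : Fin m, (∑ b : Fin n, ∑ i, (starRingEnd ℂ) (Ψ j i ((a, b))) * Ψ j i ((a', b)))
        = if a = a' then (n : ℂ) else 0 := by
      intro a a'
      have : ∀ b : Fin n, (∑ i, (starRingEnd ℂ) (Ψ j i ((a, b))) * Ψ j i ((a', b)))
          = if a = a' then 1 else 0 := by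
        intro b
        rw [Hc j (a, b) (a', b)]
        by_cases h : a = a' <;> simp [h, Prod.ext_iff]
      by_cases h : a = a'
      · subst h; simp [this]
      · simp [this, h]
    calc (∑ a, ∑ a', K a a' * (∑ b, ∑ i, (starRingEnd ℂ) (Ψ j i ((a, b))) * Ψ j i ((a', b))))
        = ∑ a, ∑ a', K a a' * (if a = a' then (n : ℂ) else 0) := by
          exact Finset.sum_congr rfl fun a _ => Finset.sum_congr rfl fun a' _ => by rw [h2]
      _ = ∑ a : Fin m, K a a * n := by
          refine Finset.sum_congr rfl fun a _ => ?_
          simp [Finset.mul_sum, mul_ite]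
      _ = (∑ a, K a a) * n := by rw [Finset.sum_mul]
      _ = 0 := by rw [htr, zero_mul]
  have hzeroR : ∀ j, (∑ i, c j i) = 0 := by
    intro j
    have h1 : (∑ i, c j i) = (∑ i, chat j i).re := by
      rw [Complex.re_sum]
      exact Finset.sum_congr rfl fun i _ => hcre j i
    rw [h1, hzeroC j, Complex.zero_re]
  -- pair-indexed versions
  set cp : Fin t × Fin (m * n) → ℝ := fun p => c p.1 p.2 with hcp
  set Kext : (Fin m × Fin n) → (Fin m × Fin n) → ℂ :=
    fun x y => K x.1 y.1 * (if x.2 = y.2 then 1 else 0) with hKext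
  set S : (Fin m × Fin n) → (Fin m × Fin n) → ℂ :=
    fun x y => ∑ p : Fin t × Fin (m * n), (cp p : ℂ) *
      (Ψ p.1 p.2 x * (starRingEnd ℂ) (Ψ p.1 p.2 y)) with hS
  -- key identity
  have key : ∀ p : Fin t × Fin (m * n),
      (∑ x : Fin m × Fin n, ∑ y : Fin m × Fin n,
        Kext x y * ((starRingEnd ℂ) (Ψ p.1 p.2 x) * Ψ p.1 p.2 y)) = chat p.1 p.2 := by
    intro p
    rw [hchat]
    simp only [hKext, Fintype.sum_prod_type]
    rw [show (∑ a : Fin m, ∑ b : Fin n, ∑ a' : Fin m, ∑ b' : Fin n,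
        K a a' * (if b = b' then (1:ℂ) else 0) *
          ((starRingEnd ℂ) (Ψ p.1 p.2 (a, b)) * Ψ p.1 p.2 (a', b')))
      = ∑ a : Fin m, ∑ a' : Fin m, ∑ b : Fin n, ∑ b' : Fin n,
        K a a' * (if b = b' then (1:ℂ) else 0) *
          ((starRingEnd ℂ) (Ψ p.1 p.2 (a, b)) * Ψ p.1 p.2 (a', b')) from
      Finset.sum_congr rfl fun a _ => Finset.sum_comm]
    refine Finset.sum_congr rfl fun a _ => Finset.sum_congr rfl fun a' _ => ?_
    rw [Finset.mul_sum]
    refine Finset.sum_congr rfl fun b _ => ?_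
    rw [show (∑ b' : Fin n, K a a' * (if b = b' then (1:ℂ) else 0) *
        ((starRingEnd ℂ) (Ψ p.1 p.2 (a, b)) * Ψ p.1 p.2 (a', b')))
      = ∑ b' : Fin n, (if b = b' then
          K a a' * ((starRingEnd ℂ) (Ψ p.1 p.2 (a, b)) * Ψ p.1 p.2 (a', b')) else 0) from
      Finset.sum_congr rfl fun b' _ => by by_cases h : b = b' <;> simp [h]]
    rw [Finset.sum_ite_eq]
    simp
  -- E1
  have hE1 : (∑ x : Fin m × Fin n, ∑ y : Fin m × Fin n, Kext x y * (starRingEnd ℂ) (Kext x y))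
      = (n : ℂ) * ∑ a, ∑ a', (Complex.normSq (K a a') : ℂ) := by
    have h1 : ∀ x y : Fin m × Fin n, Kext x y * (starRingEnd ℂ) (Kext x y)
        = if x.2 = y.2 then (Complex.normSq (K x.1 y.1) : ℂ) else 0 := by
      intro x y
      by_cases h : x.2 = y.2 <;> simp [hKext, h, Complex.mul_conj]
    simp only [h1, Fintype.sum_prod_type]
    rw [Finset.mul_sum]
    rw [show (∑ a : Fin m, ∑ b : Fin n, ∑ a' : Fin m, ∑ b' : Fin n,
        (if b = b' then (Complex.normSq (K a a') : ℂ) else 0))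
      = ∑ a : Fin m, ∑ a' : Fin m, ∑ b : Fin n, ∑ b' : Fin n,
        (if b = b' then (Complex.normSq (K a a') : ℂ) else 0) from
      Finset.sum_congr rfl fun a _ => Finset.sum_comm]
    refine Finset.sum_congr rfl fun a _ => ?_
    rw [Finset.mul_sum]
    refine Finset.sum_congr rfl fun a' _ => ?_
    simp [Finset.sum_ite_eq, mul_comm]
  -- E2
  have hE2 : (∑ x : Fin m × Fin n, ∑ y : Fin m × Fin n, Kext x y * (starRingEnd ℂ) (S x y))
      = ∑ p : Fin t × Fin (m * n), (cp p : ℂ) * chat p.1 p.2 := by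
    have h1 : ∀ x y : Fin m × Fin n, Kext x y * (starRingEnd ℂ) (S x y)
        = ∑ p : Fin t × Fin (m * n), (cp p : ℂ) *
            (Kext x y * ((starRingEnd ℂ) (Ψ p.1 p.2 x) * Ψ p.1 p.2 y)) := by
      intro x y
      rw [hS]
      simp only [map_sum, _root_.map_mul, Complex.conj_conj, Complex.conj_ofReal, Finset.mul_sum]
      exact Finset.sum_congr rfl fun p _ => by ring
    simp only [h1]
    rw [sum3_comm]
    refine Finset.sum_congr rfl fun p _ => ?_
    rw [← key p, Finset.mul_sum]
    exact Finset.sum_congr rfl fun x _ => by rw [Finset.mul_sum]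
  -- E3
  have hE3 : (∑ x : Fin m × Fin n, ∑ y : Fin m × Fin n, S x y * (starRingEnd ℂ) (Kext x y))
      = (starRingEnd ℂ) (∑ p : Fin t × Fin (m * n), (cp p : ℂ) * chat p.1 p.2) := by
    rw [← hE2, map_sum]
    refine Finset.sum_congr rfl fun x _ => ?_
    rw [map_sum]
    refine Finset.sum_congr rfl fun y _ => ?_
    simp only [_root_.map_mul, Complex.conj_conj]
    exact mul_comm _ _
  -- E4
  have hG : ∀ p q : Fin t × Fin (m * n),
      ((∑ x, Ψ p.1 p.2 x * (starRingEnd ℂ) (Ψ q.1 q.2 x)) *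
        (∑ y, (starRingEnd ℂ) (Ψ p.1 p.2 y) * Ψ q.1 q.2 y))
      = ((if p.1 = q.1 then (if p.2 = q.2 then (1:ℝ) else 0) else 1 / ((m:ℝ) * n) : ℝ) : ℂ) := by
    intro p q
    have h1 : (∑ x, Ψ p.1 p.2 x * (starRingEnd ℂ) (Ψ q.1 q.2 x))
        = (starRingEnd ℂ) (∑ y, (starRingEnd ℂ) (Ψ p.1 p.2 y) * Ψ q.1 q.2 y) := by
      rw [map_sum]
      refine Finset.sum_congr rfl fun x _ => ?_
      rw [_root_.map_mul, Complex.conj_conj, mul_comm]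
    rw [h1, ← Complex.normSq_eq_conj_mul_self, Hg p.1 q.1 p.2 q.2]
  have hE4 : (∑ x : Fin m × Fin n, ∑ y : Fin m × Fin n, S x y * (starRingEnd ℂ) (S x y))
      = ∑ p : Fin t × Fin (m * n), ∑ q : Fin t × Fin (m * n), (cp p : ℂ) * (cp q : ℂ) *
          ((if p.1 = q.1 then (if p.2 = q.2 then (1:ℝ) else 0) else 1 / ((m:ℝ) * n) : ℝ) : ℂ) := by
    have h1 : ∀ x y : Fin m × Fin n, S x y * (starRingEnd ℂ) (S x y)
        = ∑ p : Fin t × Fin (m * n), ∑ q : Fin t × Fin (m * n), (cp p : ℂ) * (cp q : ℂ) *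
            ((Ψ p.1 p.2 x * (starRingEnd ℂ) (Ψ q.1 q.2 x)) *
             ((starRingEnd ℂ) (Ψ p.1 p.2 y) * Ψ q.1 q.2 y)) := by
      intro x y
      rw [hS]
      rw [map_sum, Finset.sum_mul_sum]
      refine Finset.sum_congr rfl fun p _ => Finset.sum_congr rfl fun q _ => ?_
      simp only [_root_.map_mul, Complex.conj_conj, Complex.conj_ofReal]
      ring
    simp only [h1]
    rw [sum4_comm]
    refine Finset.sum_congr rfl fun p _ => Finset.sum_congr rfl fun q _ => ?_
    rw [← hG p q]
    rw [Finset.sum_mul_sum]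
    rw [Finset.mul_sum]
    refine Finset.sum_congr rfl fun x _ => ?_
    rw [Finset.mul_sum]
  -- total sum of coefficients vanishes
  have htot : (∑ p : Fin t × Fin (m * n), cp p) = 0 := by
    rw [Fintype.sum_prod_type]
    simp [hcp, hzeroR]
  -- real Gram computation
  have hGreal : (∑ p : Fin t × Fin (m * n), ∑ q : Fin t × Fin (m * n), cp p * cp q *
      (if p.1 = q.1 then (if p.2 = q.2 then (1:ℝ) else 0) else 1 / ((m:ℝ) * n)))
      = ∑ p : Fin t × Fin (m * n), (cp p) ^ 2 := by
    refine Finset.sum_congr rfl fun p _ => ?_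
    have hsplit : ∀ q : Fin t × Fin (m * n), cp p * cp q *
        (if p.1 = q.1 then (if p.2 = q.2 then (1:ℝ) else 0) else 1 / ((m:ℝ) * n))
        = (if p = q then cp p * cp q else 0)
          + cp p * cp q * (1 / ((m:ℝ) * n))
          - (if p.1 = q.1 then cp p * cp q * (1 / ((m:ℝ) * n)) else 0) := by
      intro q
      by_cases h1 : p.1 = q.1
      · by_cases h2 : p.2 = q.2
        · have : p = q := Prod.ext h1 h2
          simp [h1, h2, this]
        · have : ¬ p = q := fun h => h2 (by rw [h])
          simp [h1, h2, this]
      · have : ¬ p = q := fun h => h1 (by rw [h])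
        simp [h1, this]
    simp only [hsplit]
    rw [Finset.sum_sub_distrib, Finset.sum_add_distrib]
    have e1 : (∑ q : Fin t × Fin (m * n), if p = q then cp p * cp q else 0) = cp p ^ 2 := by
      rw [Finset.sum_ite_eq]
      simp [pow_two]
    have e2 : (∑ q : Fin t × Fin (m * n), cp p * cp q * (1 / ((m:ℝ) * n))) = 0 := by
      rw [show (∑ q : Fin t × Fin (m * n), cp p * cp q * (1 / ((m:ℝ) * n)))
          = cp p * (1 / ((m:ℝ) * n)) * ∑ q : Fin t × Fin (m * n), cp q from by
        rw [Finset.mul_sum]; exact Finset.sum_congr rfl fun q _ => by ring]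
      rw [htot, mul_zero]
    have e3 : (∑ q : Fin t × Fin (m * n), if p.1 = q.1 then cp p * cp q * (1 / ((m:ℝ) * n)) else 0)
        = 0 := by
      rw [Fintype.sum_prod_type]
      have : ∀ j' : Fin t, (∑ i' : Fin (m * n),
          if p.1 = j' then cp p * cp (j', i') * (1 / ((m:ℝ) * n)) else 0)
          = if p.1 = j' then cp p * (1 / ((m:ℝ) * n)) * (∑ i', c j' i') else 0 := by
        intro j'
        split_ifs with h
        · rw [Finset.mul_sum]
          exact Finset.sum_congr rfl fun i' _ => by rw [hcp]; ring
        · simp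
      simp only [this]
      rw [Finset.sum_ite_eq]
      simp [hzeroR]
    rw [e1, e2, e3]
    ring
  -- positivity
  set E : ℂ := ∑ x : Fin m × Fin n, ∑ y : Fin m × Fin n,
    (Kext x y - S x y) * (starRingEnd ℂ) (Kext x y - S x y) with hE
  have hEpos : 0 ≤ E.re := by
    rw [hE, Complex.re_sum]
    refine Finset.sum_nonneg fun x _ => ?_
    rw [Complex.re_sum]
    refine Finset.sum_nonneg fun y _ => ?_
    rw [Complex.mul_conj]
    simp [Complex.normSq_nonneg]
  have hEeq : E = (∑ x : Fin m × Fin n, ∑ y : Fin m × Fin n, Kext x y * (starRingEnd ℂ) (Kext x y))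
      - (∑ x : Fin m × Fin n, ∑ y : Fin m × Fin n, Kext x y * (starRingEnd ℂ) (S x y))
      - (∑ x : Fin m × Fin n, ∑ y : Fin m × Fin n, S x y * (starRingEnd ℂ) (Kext x y))
      + (∑ x : Fin m × Fin n, ∑ y : Fin m × Fin n, S x y * (starRingEnd ℂ) (S x y)) := by
    rw [hE]
    have hpt : ∀ x y : Fin m × Fin n,
        (Kext x y - S x y) * (starRingEnd ℂ) (Kext x y - S x y)
        = Kext x y * (starRingEnd ℂ) (Kext x y) - Kext x y * (starRingEnd ℂ) (S x y)
          - S x y * (starRingEnd ℂ) (Kext x y) + S x y * (starRingEnd ℂ) (S x y) := by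
      intro x y
      rw [map_sub]
      ring
    simp only [hpt, Finset.sum_add_distrib, Finset.sum_sub_distrib]
  -- real parts
  have hre1 : (∑ x : Fin m × Fin n, ∑ y : Fin m × Fin n,
      Kext x y * (starRingEnd ℂ) (Kext x y)).re = (n:ℝ) * ∑ a, ∑ a', Complex.normSq (K a a') := by
    rw [hE1]
    push_cast
    simp
  have hre2 : (∑ x : Fin m × Fin n, ∑ y : Fin m × Fin n,
      Kext x y * (starRingEnd ℂ) (S x y)).re = ∑ p : Fin t × Fin (m * n), (cp p) ^ 2 := by
    rw [hE2, Complex.re_sum]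
    refine Finset.sum_congr rfl fun p _ => ?_
    have : ((cp p : ℂ) * chat p.1 p.2).re = cp p * (chat p.1 p.2).re := by
      simp [Complex.mul_re]
    rw [this, ← hcre, hcp, pow_two]
  have hre3 : (∑ x : Fin m × Fin n, ∑ y : Fin m × Fin n,
      S x y * (starRingEnd ℂ) (Kext x y)).re = ∑ p : Fin t × Fin (m * n), (cp p) ^ 2 := by
    rw [hE3, Complex.conj_re]
    rw [← hE2, hre2]
  have hre4 : (∑ x : Fin m × Fin n, ∑ y : Fin m × Fin n,
      S x y * (starRingEnd ℂ) (S x y)).re = ∑ p : Fin t × Fin (m * n), (cp p) ^ 2 := by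
    rw [hE4, Complex.re_sum]
    rw [← hGreal]
    refine Finset.sum_congr rfl fun p _ => ?_
    rw [Complex.re_sum]
    refine Finset.sum_congr rfl fun q _ => ?_
    rw [← Complex.ofReal_mul, ← Complex.ofReal_mul, Complex.ofReal_re]
  have hgoal : (∑ j, ∑ i, (c j i) ^ 2) = ∑ p : Fin t × Fin (m * n), (cp p) ^ 2 := by
    rw [Fintype.sum_prod_type]
  have hfin : 0 ≤ (n:ℝ) * (∑ a, ∑ a', Complex.normSq (K a a'))
      - (∑ p : Fin t × Fin (m * n), (cp p) ^ 2) := by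
    have := hEpos
    rw [hEeq] at this
    rw [Complex.add_re, Complex.sub_re, Complex.sub_re, hre1, hre2, hre3, hre4] at this
    linarith
  rw [hgoal]
  linarith

end Bessel


lemma completeness {m n t : ℕ} (Ψ : Fin t → Fin (m * n) → (Fin m × Fin n) → ℂ)
    (horth : ∀ j, ∀ i i' : Fin (m * n),
      (∑ a, star (Ψ j i a) * Ψ j i' a) = if i = i' then 1 else 0)
    (j : Fin t) (x y : Fin m × Fin n) :
    (∑ i, (starRingEnd ℂ) (Ψ j i x) * Ψ j i y) = if x = y then 1 else 0 := by
  classical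
  set e : Fin m × Fin n ≃ Fin (m * n) := finProdFinEquiv with he
  set A : Matrix (Fin (m * n)) (Fin (m * n)) ℂ := Matrix.of (fun i k => Ψ j i (e.symm k)) with hA
  have h1 : A * Aᴴ = 1 := by
    ext i i'
    rw [Matrix.mul_apply]
    have h2 : ∀ k, A i k * Aᴴ k i' = Ψ j i (e.symm k) * star (Ψ j i' (e.symm k)) := by
      intro k
      rw [Matrix.conjTranspose_apply, hA]
      rfl
    simp only [h2]
    rw [Equiv.sum_comp e.symm (fun x => Ψ j i x * star (Ψ j i' x))]
    have h3 : (∑ x : Fin m × Fin n, Ψ j i x * star (Ψ j i' x))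
        = star (∑ a, star (Ψ j i a) * Ψ j i' a) := by
      rw [star_sum]
      exact Finset.sum_congr rfl fun x _ => by
        rw [star_mul', star_star]
    rw [h3, horth j i i']
    by_cases h : i = i'
    · simp [h, Matrix.one_apply]
    · simp [h, Matrix.one_apply]
  have h4 : Aᴴ * A = 1 := mul_eq_one_comm.mp h1
  have h6 : (Aᴴ * A) (e x) (e y) = ∑ i, (starRingEnd ℂ) (Ψ j i x) * Ψ j i y := by
    rw [Matrix.mul_apply]
    refine Finset.sum_congr rfl fun i _ => ?_
    rw [Matrix.conjTranspose_apply, hA]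
    simp [RCLike.star_def]
  have h7 : (Aᴴ * A) (e x) (e y) = if x = y then 1 else 0 := by
    rw [h4, Matrix.one_apply]
    by_cases h : x = y
    · simp [h]
    · have : ¬ e x = e y := fun hh => h (e.injective hh)
      simp [h, this]
  rw [← h6, h7]


lemma gram_val {m n t : ℕ} (hm : 0 < m) (hn : 0 < n)
    (Ψ : Fin t → Fin (m * n) → (Fin m × Fin n) → ℂ)
    (horth : ∀ j, ∀ i i' : Fin (m * n),
      (∑ a, star (Ψ j i a) * Ψ j i' a) = if i = i' then 1 else 0)
    (hmub : ∀ j j', j ≠ j' → ∀ i i' : Fin (m * n),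
      ‖∑ a, star (Ψ j i a) * Ψ j' i' a‖ = 1 / Real.sqrt (m * n))
    (j j' : Fin t) (i i' : Fin (m * n)) :
    Complex.normSq (∑ a, (starRingEnd ℂ) (Ψ j i a) * Ψ j' i' a)
      = if j = j' then (if i = i' then (1:ℝ) else 0) else 1 / ((m:ℝ) * n) := by
  have hstar : (∑ a, (starRingEnd ℂ) (Ψ j i a) * Ψ j' i' a)
      = ∑ a, star (Ψ j i a) * Ψ j' i' a := rfl
  rw [hstar]
  by_cases h : j = j'
  · subst h
    rw [horth j i i']
    by_cases h2 : i = i' <;> simp [h2]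
  · rw [if_neg h, ← Complex.sq_norm, hmub j j' h i i']
    rw [div_pow, one_pow, Real.sq_sqrt (by positivity)]



theorem mub_purity_bound_complex (m n t : ℕ) (hm : 0 < m) (hn : 0 < n) (ht : 0 < t)
    (Ψ : Fin t → Fin (m * n) → (Fin m × Fin n) → ℂ)
    (horth : ∀ j, ∀ i i' : Fin (m * n),
      (∑ a, star (Ψ j i a) * Ψ j i' a) = if i = i' then 1 else 0)
    (hmub : ∀ j j', j ≠ j' → ∀ i i' : Fin (m * n),
      ‖∑ a, star (Ψ j i a) * Ψ j' i' a‖ = 1 / Real.sqrt (m * n)) :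
    ∑ j : Fin t, ∑ i : Fin (m * n),
        (Matrix.trace (trA (Matrix.vecMulVec (Ψ j i) (star (Ψ j i))) ^ 2)).re
      ≤ ((m : ℝ) ^ 2 + (t : ℝ) - 1) * n := by
  classical
  have hm' : (m : ℝ) ≠ 0 := Nat.cast_ne_zero.mpr hm.ne'
  have Hc := completeness Ψ horth
  have Hg := gram_val hm hn Ψ horth hmub
  set σ : Fin t → Fin (m * n) → Fin m → Fin m → ℂ :=
    fun j i a a' => ∑ b, (starRingEnd ℂ) (Ψ j i ((a, b))) * Ψ j i ((a', b)) with hσ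
  -- purity in terms of σ
  have hpur : ∀ j i, (Matrix.trace (trA (Matrix.vecMulVec (Ψ j i) (star (Ψ j i))) ^ 2)).re
      = ∑ a, ∑ a', Complex.normSq (σ j i a a') := by
    intro j i
    rw [purity_eq]
    have hterm : ∀ a a' : Fin m, ((∑ b, Ψ j i (a, b) * (starRingEnd ℂ) (Ψ j i (a', b))) *
        (∑ b, (starRingEnd ℂ) (Ψ j i (a, b)) * Ψ j i (a', b)))
        = ((Complex.normSq (σ j i a a') : ℝ) : ℂ) := by
      intro a a'
      have h1 : (∑ b, Ψ j i (a, b) * (starRingEnd ℂ) (Ψ j i (a', b)))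
          = (starRingEnd ℂ) (σ j i a a') := by
        rw [hσ, map_sum]
        refine Finset.sum_congr rfl fun b _ => ?_
        simp only [_root_.map_mul, Complex.conj_conj]
      rw [h1, ← Complex.normSq_eq_conj_mul_self]
    rw [Complex.re_sum]
    refine Finset.sum_congr rfl fun a _ => ?_
    rw [Complex.re_sum]
    refine Finset.sum_congr rfl fun a' _ => ?_
    rw [hterm a a', Complex.ofReal_re]
  -- hermiticity
  have hherm : ∀ j i a a', σ j i a' a = (starRingEnd ℂ) (σ j i a a') := by
    intro j i a a'
    rw [hσ, map_sum]
    refine Finset.sum_congr rfl fun b _ => ?_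
    simp only [_root_.map_mul, Complex.conj_conj]
    exact mul_comm _ _
  have hdiagim : ∀ j i a, (σ j i a a).im = 0 := by
    intro j i a
    have := congrArg Complex.im (hherm j i a a)
    rw [Complex.conj_im] at this
    linarith
  -- trace of σ is 1
  have htrace : ∀ j i, (∑ a, σ j i a a) = 1 := by
    intro j i
    have h1 : (∑ a, σ j i a a) = ∑ x : Fin m × Fin n, (starRingEnd ℂ) (Ψ j i x) * Ψ j i x := by
      rw [Fintype.sum_prod_type]
    rw [h1]
    have := horth j i i
    simpa using this
  -- sum over i of diagonal entries is n
  have hdiagC : ∀ j a, (∑ i, σ j i a a) = (n : ℂ) := by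
    intro j a
    have h1 : (∑ i, σ j i a a) = ∑ b, ∑ i, (starRingEnd ℂ) (Ψ j i ((a, b))) * Ψ j i ((a, b)) :=
      Finset.sum_comm
    rw [h1]
    have h2 : ∀ b : Fin n, (∑ i, (starRingEnd ℂ) (Ψ j i ((a, b))) * Ψ j i ((a, b))) = 1 := by
      intro b
      rw [Hc j (a, b) (a, b)]
      simp
    simp [h2]
  have hmC : (m : ℂ) ≠ 0 := Nat.cast_ne_zero.mpr hm.ne'
  -- diagonal Bessel bound
  have Bd : ∀ a0 : Fin m, (∑ j, ∑ i, ((σ j i a0 a0).re - (m:ℝ)⁻¹) ^ 2)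
      ≤ (n : ℝ) * (1 - (m:ℝ)⁻¹) := by
    intro a0
    set K : Matrix (Fin m) (Fin m) ℂ := fun x y =>
      (if x = a0 then if y = a0 then 1 else 0 else 0)
        - (if x = y then (((m:ℝ)⁻¹ : ℝ) : ℂ) else 0) with hK
    have htr : (∑ a, K a a) = 0 := by
      have h1 : ∀ a : Fin m, K a a = (if a = a0 then (1:ℂ) else 0) - (((m:ℝ)⁻¹ : ℝ) : ℂ) := by
        intro a; rw [hK]; by_cases h : a = a0 <;> simp [h]
      simp only [h1]
      rw [Finset.sum_sub_distrib]
      rw [Finset.sum_ite_eq']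
      simp only [Finset.mem_univ, if_true, Finset.sum_const, Finset.card_univ,
        Fintype.card_fin, nsmul_eq_mul]
      rw [show ((m:ℕ) : ℂ) * (((m:ℝ)⁻¹ : ℝ) : ℂ) = 1 from by
        push_cast; field_simp]
      ring
    have hchatval : ∀ j i, (∑ a, ∑ a', K a a' *
        (∑ b, (starRingEnd ℂ) (Ψ j i ((a, b))) * Ψ j i ((a', b))))
        = σ j i a0 a0 - (((m:ℝ)⁻¹ : ℝ) : ℂ) := by
      intro j i
      have hpt : ∀ a a' : Fin m, K a a' *
          (∑ b, (starRingEnd ℂ) (Ψ j i ((a, b))) * Ψ j i ((a', b)))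
          = (if a = a0 then (if a' = a0 then σ j i a a' else 0) else 0)
            - (if a = a' then (((m:ℝ)⁻¹ : ℝ) : ℂ) * σ j i a a' else 0) := by
        intro a a'
        have hss : (∑ b, (starRingEnd ℂ) (Ψ j i ((a, b))) * Ψ j i ((a', b))) = σ j i a a' := rfl
        rw [hss, hK]
        by_cases h1 : a = a0 <;> by_cases h2 : a' = a0 <;> by_cases h3 : a = a' <;>
          simp [h1, h2, h3, sub_mul]
      simp only [hpt, Finset.sum_sub_distrib]
      have p1 : (∑ a, ∑ a', (if a = a0 then (if a' = a0 then σ j i a a' else 0) else 0))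
          = σ j i a0 a0 := by
        have inner : ∀ a : Fin m, (∑ a', (if a = a0 then (if a' = a0 then σ j i a a' else 0) else 0))
            = if a = a0 then σ j i a a0 else 0 := by
          intro a
          by_cases h : a = a0 <;> simp [h, Finset.sum_ite_eq']
        simp only [inner]
        simp [Finset.sum_ite_eq']
      have p2 : (∑ a, ∑ a', (if a = a' then (((m:ℝ)⁻¹ : ℝ) : ℂ) * σ j i a a' else 0))
          = (((m:ℝ)⁻¹ : ℝ) : ℂ) := by
        have inner : ∀ a : Fin m, (∑ a', (if a = a' then (((m:ℝ)⁻¹ : ℝ) : ℂ) * σ j i a a' else 0))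
            = (((m:ℝ)⁻¹ : ℝ) : ℂ) * σ j i a a := by
          intro a
          rw [Finset.sum_ite_eq]
          simp
        simp only [inner]
        rw [← Finset.mul_sum, htrace j i, mul_one]
      rw [p1, p2]
    have hKval : (∑ x, ∑ y, Complex.normSq (K x y)) = 1 - (m:ℝ)⁻¹ := by
      have hpt : ∀ x y : Fin m, Complex.normSq (K x y)
          = (if x = a0 then (if y = a0 then (1-(m:ℝ)⁻¹)^2 else 0)
              else (if x = y then ((m:ℝ)⁻¹)^2 else 0)) := by
        intro x y
        rw [hK]
        by_cases hx : x = a0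
        · subst hx
          by_cases hy : y = x
          · subst hy
            simp only [eq_self_iff_true, if_true]
            rw [show (1 : ℂ) - (((m:ℝ)⁻¹ : ℝ) : ℂ) = (((1 - (m:ℝ)⁻¹ : ℝ)) : ℂ) from by
              push_cast; ring]
            rw [Complex.normSq_ofReal]; ring
          · have hy' : ¬ x = y := fun h => hy h.symm
            simp [hy, hy']
        · by_cases hxy : x = y
          · subst hxy
            simp only [if_neg hx, eq_self_iff_true, if_true]
            rw [show (0 : ℂ) - (((m:ℝ)⁻¹ : ℝ) : ℂ) = (((-(m:ℝ)⁻¹ : ℝ)) : ℂ) from by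
              push_cast; ring]
            rw [Complex.normSq_ofReal]; ring
          · simp [hx, hxy]
      simp only [hpt]
      have hrow : ∀ x : Fin m, (∑ y, (if x = a0 then (if y = a0 then (1-(m:ℝ)⁻¹)^2 else 0)
              else (if x = y then ((m:ℝ)⁻¹)^2 else 0)))
          = if x = a0 then (1-(m:ℝ)⁻¹)^2 else ((m:ℝ)⁻¹)^2 := by
        intro x
        by_cases hx : x = a0
        · simp [hx, Finset.sum_ite_eq']
        · simp [hx, Finset.sum_ite_eq]
      simp only [hrow]
      have hsplit : ∀ x : Fin m, (if x = a0 then (1-(m:ℝ)⁻¹)^2 else ((m:ℝ)⁻¹)^2)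
          = ((m:ℝ)⁻¹)^2 + (if x = a0 then (1-(m:ℝ)⁻¹)^2 - ((m:ℝ)⁻¹)^2 else 0) := by
        intro x
        by_cases hx : x = a0 <;> simp [hx]
      simp only [hsplit]
      rw [Finset.sum_add_distrib, Finset.sum_ite_eq']
      simp only [Finset.mem_univ, if_true, Finset.sum_const, Finset.card_univ,
        Fintype.card_fin, nsmul_eq_mul]
      field_simp
      ring
    have happ := bessel Ψ Hc Hg K htr (fun j i => (σ j i a0 a0).re - (m:ℝ)⁻¹)
      (fun j i => by
        rw [hchatval j i, Complex.sub_re, Complex.ofReal_re])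
    rw [hKval] at happ
    exact happ
  -- generic double pick lemma
  have pick : ∀ {M : Type} [inst : AddCommMonoid M] (f : Fin m → Fin m → M) (u v : Fin m),
      (∑ x, ∑ y, (if x = u then (if y = v then f x y else 0) else 0)) = f u v := by
    intro M inst f u v
    have inner : ∀ x, (∑ y, if x = u then (if y = v then f x y else 0) else 0)
        = if x = u then f x v else 0 := by
      intro x
      by_cases h : x = u <;> simp [h, Finset.sum_ite_eq']
    simp only [inner]
    simp [Finset.sum_ite_eq']
  -- off-diagonal real-part bound
  have B1 : ∀ a b : Fin m, a ≠ b → (∑ j, ∑ i, (2 * (σ j i a b).re) ^ 2) ≤ (n : ℝ) * 2 := by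
    intro a b hab
    have hab' : ¬ a = b := hab
    have hba : ¬ b = a := fun h => hab h.symm
    set K : Matrix (Fin m) (Fin m) ℂ := fun x y =>
      (if x = a then if y = b then 1 else 0 else 0)
        + (if x = b then if y = a then 1 else 0 else 0) with hK
    have htr : (∑ x, K x x) = 0 := by
      have h1 : ∀ x : Fin m, K x x = 0 := by
        intro x
        rw [hK]
        by_cases hxa : x = a
        · have hxb : ¬ x = b := fun h => hab (hxa.symm.trans h)
          simp [hxa, hxb, hab', hba]
        · by_cases hxb : x = b <;> simp [hxa, hxb, hab', hba]
      simp [h1]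
    have hchatval : ∀ j i, (∑ a'', ∑ a', K a'' a' *
        (∑ bb, (starRingEnd ℂ) (Ψ j i ((a'', bb))) * Ψ j i ((a', bb))))
        = σ j i a b + σ j i b a := by
      intro j i
      have hpt : ∀ x y : Fin m, K x y *
          (∑ bb, (starRingEnd ℂ) (Ψ j i ((x, bb))) * Ψ j i ((y, bb)))
          = (if x = a then (if y = b then σ j i x y else 0) else 0)
            + (if x = b then (if y = a then σ j i x y else 0) else 0) := by
        intro x y
        have hss : (∑ bb, (starRingEnd ℂ) (Ψ j i ((x, bb))) * Ψ j i ((y, bb))) = σ j i x y := rfl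
        rw [hss, hK]
        by_cases h1 : x = a <;> by_cases h2 : y = b <;> by_cases h3 : x = b <;>
          by_cases h4 : y = a <;> simp [h1, h2, h3, h4, hab', hba, add_mul]
      simp only [hpt, Finset.sum_add_distrib]
      rw [pick (fun x y => σ j i x y) a b, pick (fun x y => σ j i x y) b a]
    have hKval : (∑ x, ∑ y, Complex.normSq (K x y)) = 2 := by
      have hpt : ∀ x y : Fin m, Complex.normSq (K x y)
          = (if x = a then (if y = b then (1:ℝ) else 0) else 0)
            + (if x = b then (if y = a then (1:ℝ) else 0) else 0) := by
        intro x y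
        rw [hK]
        by_cases h1 : x = a <;> by_cases h2 : y = b <;> by_cases h3 : x = b <;>
          by_cases h4 : y = a <;>
          first
          | (exact absurd (h1.symm.trans h3) hab)
          | (exact absurd (h4.symm.trans h2) hab)
          | simp [h1, h2, h3, h4, hab', hba]
      simp only [hpt, Finset.sum_add_distrib]
      rw [pick (fun _ _ => (1:ℝ)) a b, pick (fun _ _ => (1:ℝ)) b a]
      norm_num
    have happ := bessel Ψ Hc Hg K htr (fun j i => 2 * (σ j i a b).re)
      (fun j i => by
        rw [hchatval j i, Complex.add_re, hherm j i a b, Complex.conj_re]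
        ring)
    rw [hKval] at happ
    exact happ
  -- off-diagonal imaginary-part bound
  have B2 : ∀ a b : Fin m, a ≠ b → (∑ j, ∑ i, ((-2) * (σ j i a b).im) ^ 2) ≤ (n : ℝ) * 2 := by
    intro a b hab
    have hab' : ¬ a = b := hab
    have hba : ¬ b = a := fun h => hab h.symm
    set K : Matrix (Fin m) (Fin m) ℂ := fun x y =>
      (if x = a then if y = b then Complex.I else 0 else 0)
        + (if x = b then if y = a then -Complex.I else 0 else 0) with hK
    have htr : (∑ x, K x x) = 0 := by
      have h1 : ∀ x : Fin m, K x x = 0 := by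
        intro x
        rw [hK]
        by_cases hxa : x = a
        · have hxb : ¬ x = b := fun h => hab (hxa.symm.trans h)
          simp [hxa, hxb, hab', hba]
        · by_cases hxb : x = b <;> simp [hxa, hxb, hab', hba]
      simp [h1]
    have hchatval : ∀ j i, (∑ a'', ∑ a', K a'' a' *
        (∑ bb, (starRingEnd ℂ) (Ψ j i ((a'', bb))) * Ψ j i ((a', bb))))
        = Complex.I * σ j i a b + (-Complex.I) * σ j i b a := by
      intro j i
      have hpt : ∀ x y : Fin m, K x y *
          (∑ bb, (starRingEnd ℂ) (Ψ j i ((x, bb))) * Ψ j i ((y, bb)))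
          = (if x = a then (if y = b then Complex.I * σ j i x y else 0) else 0)
            + (if x = b then (if y = a then (-Complex.I) * σ j i x y else 0) else 0) := by
        intro x y
        have hss : (∑ bb, (starRingEnd ℂ) (Ψ j i ((x, bb))) * Ψ j i ((y, bb))) = σ j i x y := rfl
        rw [hss, hK]
        by_cases h1 : x = a <;> by_cases h2 : y = b <;> by_cases h3 : x = b <;>
          by_cases h4 : y = a <;> simp [h1, h2, h3, h4, hab', hba, add_mul]
      simp only [hpt, Finset.sum_add_distrib]
      rw [pick (fun x y => Complex.I * σ j i x y) a b,
        pick (fun x y => (-Complex.I) * σ j i x y) b a]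
    have hKval : (∑ x, ∑ y, Complex.normSq (K x y)) = 2 := by
      have hpt : ∀ x y : Fin m, Complex.normSq (K x y)
          = (if x = a then (if y = b then (1:ℝ) else 0) else 0)
            + (if x = b then (if y = a then (1:ℝ) else 0) else 0) := by
        intro x y
        rw [hK]
        by_cases h1 : x = a <;> by_cases h2 : y = b <;> by_cases h3 : x = b <;>
          by_cases h4 : y = a <;>
          first
          | (exact absurd (h1.symm.trans h3) hab)
          | (exact absurd (h4.symm.trans h2) hab)
          | simp [h1, h2, h3, h4, hab', hba]
      simp only [hpt, Finset.sum_add_distrib]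
      rw [pick (fun _ _ => (1:ℝ)) a b, pick (fun _ _ => (1:ℝ)) b a]
      norm_num
    have happ := bessel Ψ Hc Hg K htr (fun j i => (-2) * (σ j i a b).im)
      (fun j i => by
        rw [hchatval j i, Complex.add_re, hherm j i a b]
        simp [Complex.mul_re, Complex.conj_im]
        ring)
    rw [hKval] at happ
    exact happ
  -- diagonal block bound
  have hdiagbound : ∀ a : Fin m, (∑ j, ∑ i, Complex.normSq (σ j i a a))
      ≤ (n:ℝ) * (1 - (m:ℝ)⁻¹) + (t:ℝ) * n * (m:ℝ)⁻¹ := by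
    intro a
    have h3 : ∀ j, (∑ i, ((σ j i a a).re - (m:ℝ)⁻¹)) = 0 := by
      intro j
      rw [Finset.sum_sub_distrib]
      rw [show (∑ i : Fin (m*n), (σ j i a a).re) = ((∑ i, σ j i a a)).re from
        (Complex.re_sum _ _).symm]
      rw [hdiagC j a]
      simp only [Complex.natCast_re, Finset.sum_const, Finset.card_univ, Fintype.card_fin,
        nsmul_eq_mul]
      push_cast
      field_simp
      ring
    have hexp : (∑ j, ∑ i, Complex.normSq (σ j i a a))
        = (∑ j, ∑ i, ((σ j i a a).re - (m:ℝ)⁻¹)^2)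
          + 2 * (m:ℝ)⁻¹ * (∑ j, ∑ i, ((σ j i a a).re - (m:ℝ)⁻¹))
          + (t:ℝ) * ((m*n : ℕ):ℝ) * ((m:ℝ)⁻¹)^2 := by
      have hpt : ∀ (j : Fin t) (i : Fin (m*n)), Complex.normSq (σ j i a a)
          = ((σ j i a a).re - (m:ℝ)⁻¹)^2
            + 2 * (m:ℝ)⁻¹ * ((σ j i a a).re - (m:ℝ)⁻¹) + ((m:ℝ)⁻¹)^2 := by
        intro j i
        rw [Complex.normSq_apply, hdiagim j i a]
        ring
      simp only [hpt, Finset.sum_add_distrib]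
      rw [show (∑ j : Fin t, ∑ i : Fin (m*n), 2 * (m:ℝ)⁻¹ * ((σ j i a a).re - (m:ℝ)⁻¹))
          = 2 * (m:ℝ)⁻¹ * (∑ j, ∑ i, ((σ j i a a).re - (m:ℝ)⁻¹)) from by
        rw [Finset.mul_sum]
        exact Finset.sum_congr rfl fun j _ => by rw [Finset.mul_sum]]
      simp [Finset.sum_const, Finset.card_univ, mul_assoc, pow_two]
      try ring
    rw [hexp]
    have hz : (∑ j : Fin t, ∑ i : Fin (m*n), ((σ j i a a).re - (m:ℝ)⁻¹)) = 0 := by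
      simp [h3]
    rw [hz, mul_zero, add_zero]
    have hconst : (t:ℝ) * ((m*n : ℕ):ℝ) * ((m:ℝ)⁻¹)^2 = (t:ℝ) * n * (m:ℝ)⁻¹ := by
      push_cast
      field_simp
    rw [hconst]
    have := Bd a
    linarith
  -- off-diagonal block bound
  have hoffbound : ∀ a b : Fin m, a ≠ b → (∑ j, ∑ i, Complex.normSq (σ j i a b)) ≤ (n:ℝ) := by
    intro a b hab
    have e4 : (∑ j, ∑ i, (4:ℝ) * Complex.normSq (σ j i a b))
        = (∑ j, ∑ i, (2*(σ j i a b).re)^2) + (∑ j, ∑ i, ((-2)*(σ j i a b).im)^2) := by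
      have hpt : ∀ (j : Fin t) (i : Fin (m*n)), (4:ℝ) * Complex.normSq (σ j i a b)
          = (2*(σ j i a b).re)^2 + ((-2)*(σ j i a b).im)^2 := by
        intro j i
        rw [Complex.normSq_apply]
        ring
      simp only [hpt, Finset.sum_add_distrib]
    have e5 : (∑ j, ∑ i, (4:ℝ) * Complex.normSq (σ j i a b))
        = 4 * (∑ j, ∑ i, Complex.normSq (σ j i a b)) := by
      rw [Finset.mul_sum]
      exact Finset.sum_congr rfl fun j _ => by rw [Finset.mul_sum]
    have := B1 a b hab
    have := B2 a b hab
    rw [e5] at e4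
    linarith
  -- rewrite goal and combine
  have hgoal1 : (∑ j : Fin t, ∑ i : Fin (m * n),
        (Matrix.trace (trA (Matrix.vecMulVec (Ψ j i) (star (Ψ j i))) ^ 2)).re)
      = ∑ a : Fin m, ∑ a' : Fin m, ∑ j, ∑ i, Complex.normSq (σ j i a a') :=
    calc (∑ j : Fin t, ∑ i : Fin (m * n),
        (Matrix.trace (trA (Matrix.vecMulVec (Ψ j i) (star (Ψ j i))) ^ 2)).re)
        = ∑ j : Fin t, ∑ i : Fin (m * n), ∑ a : Fin m, ∑ a' : Fin m,
            Complex.normSq (σ j i a a') :=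
          Finset.sum_congr rfl fun j _ => Finset.sum_congr rfl fun i _ => hpur j i
      _ = ∑ a : Fin m, ∑ a' : Fin m, ∑ j, ∑ i, Complex.normSq (σ j i a a') := sum4_comm _
  rw [hgoal1]
  set D : ℝ := (n:ℝ) * (1 - (m:ℝ)⁻¹) + (t:ℝ) * n * (m:ℝ)⁻¹ with hD
  have hstep : (∑ a : Fin m, ∑ a' : Fin m, ∑ j, ∑ i, Complex.normSq (σ j i a a'))
      ≤ ∑ a : Fin m, ∑ a' : Fin m, (if a = a' then D else (n:ℝ)) := by
    refine Finset.sum_le_sum fun a _ => Finset.sum_le_sum fun a' _ => ?_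
    by_cases h : a = a'
    · subst h
      rw [if_pos rfl]
      exact hdiagbound a
    · rw [if_neg h]
      exact hoffbound a a' h
  have hval : (∑ a : Fin m, ∑ a' : Fin m, (if a = a' then D else (n:ℝ)))
      = (m:ℝ) * ((m:ℝ) * n + (D - n)) := by
    have hrow : ∀ a : Fin m, (∑ a' : Fin m, (if a = a' then D else (n:ℝ)))
        = (m:ℝ) * n + (D - n) := by
      intro a
      have hp : ∀ a' : Fin m, (if a = a' then D else (n:ℝ))
          = (n:ℝ) + (if a = a' then D - n else 0) := by
        intro a'
        by_cases h : a = a' <;> simp [h]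
      simp only [hp]
      rw [Finset.sum_add_distrib, Finset.sum_ite_eq]
      simp [Finset.sum_const, Finset.card_univ]
    simp only [hrow]
    simp [Finset.sum_const, Finset.card_univ]
    ring
  have hfinal : (m:ℝ) * ((m:ℝ) * n + (D - n)) = ((m : ℝ) ^ 2 + (t : ℝ) - 1) * n := by
    rw [hD]
    field_simp
    ring
  rw [← hfinal]
  calc (∑ a : Fin m, ∑ a' : Fin m, ∑ j, ∑ i, Complex.normSq (σ j i a a'))
      ≤ ∑ a : Fin m, ∑ a' : Fin m, (if a = a' then D else (n:ℝ)) := hstep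
    _ = (m:ℝ) * ((m:ℝ) * n + (D - n)) := hval
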